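/- arXiv:2401.09266 — 6 statements merged into one kernel-verified Lean document; each statement's English description precedes it below -/
import Mathlib

section
/- Let Q̂* ∈ Φ_ρ be a minimizer of F̂ over Φ_ρ, and let Q* ∈ ℝ^{N×K} be the matrix consisting of the first K columns of Q̂*. Then Q* ∈ Π, Q* minimizes F over Π, and F(Q*) = F̂(Q̂*); in particular, the minimum of F over Π equals the minimum of F̂ over Φ_ρ. -/
open scoped BigOperators

/-- If `Qhstar` minimizes the extended objective `Fhat` over the restricted
extended feasible set `Φ`, then its first `K` columns `Qstar` lie in the P²OT feasible
set `Pi`, minimize `F` over `Pi`, and `F Qstar = Fhat Qhstar`. -/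
theorem stmt_0
    (N K : ℕ) (hN : 0 < N) (hK : 0 < K)
    (ρ lam lamK1 : ℝ) (hρ : ρ ∈ Set.Ioo (0 : ℝ) 1) (hlam : 0 < lam) (hlamK1 : 0 ≤ lamK1)
    (P : Matrix (Fin N) (Fin K) ℝ) (hP : ∀ i j, P i j ∈ Set.Ioc (0 : ℝ) 1)
    (Pi : Set (Matrix (Fin N) (Fin K) ℝ))
    (hPi : Pi = {Q | (∀ i j, 0 ≤ Q i j) ∧ (∀ i, ∑ j, Q i j ≤ 1 / (N : ℝ)) ∧
        ∑ i, ∑ j, Q i j = ρ})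
    (F : Matrix (Fin N) (Fin K) ℝ → ℝ)
    (hF : ∀ Q, F Q = (∑ i, ∑ j, Q i j * (-Real.log (P i j))) +
        lam * ∑ j, (∑ i, Q i j) * Real.log ((∑ i, Q i j) / (ρ / (K : ℝ))))
    (C : Matrix (Fin N) (Fin (K + 1)) ℝ)
    (hC : ∀ i, C i = Fin.snoc (fun j => -Real.log (P i j)) 0)
    (β : Fin (K + 1) → ℝ) (hβ : β = Fin.snoc (fun _ => ρ / (K : ℝ)) (1 - ρ))
    (lamv : Fin (K + 1) → ℝ) (hlamv : lamv = Fin.snoc (fun _ => lam) lamK1)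
    (Fhat : Matrix (Fin N) (Fin (K + 1)) ℝ → ℝ)
    (hFhat : ∀ Qh, Fhat Qh = (∑ i, ∑ j, Qh i j * C i j) +
        ∑ j, lamv j * ((∑ i, Qh i j) * Real.log ((∑ i, Qh i j) / β j)))
    (Φ : Set (Matrix (Fin N) (Fin (K + 1)) ℝ))
    (hΦ : Φ = {Qh | (∀ i j, 0 ≤ Qh i j) ∧ (∀ i, ∑ j, Qh i j = 1 / (N : ℝ)) ∧
        ∑ i, Qh i (Fin.last K) = 1 - ρ})
    (Qhstar : Matrix (Fin N) (Fin (K + 1)) ℝ)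
    (hmem : Qhstar ∈ Φ) (hmin : ∀ Qh ∈ Φ, Fhat Qhstar ≤ Fhat Qh)
    (Qstar : Matrix (Fin N) (Fin K) ℝ)
    (hQstar : ∀ i j, Qstar i j = Qhstar i j.castSucc) :
    Qstar ∈ Pi ∧ (∀ Q ∈ Pi, F Qstar ≤ F Q) ∧ F Qstar = Fhat Qhstar := by

  have hρ1 : (1:ℝ) - ρ ≠ 0 := by have := hρ.2; linarith
  have hNne : (N:ℝ) ≠ 0 := Nat.cast_ne_zero.mpr hN.ne'
  -- key lemma: if last column sums to 1-ρ, Fhat = F of restriction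
  have key : ∀ Qh : Matrix (Fin N) (Fin (K+1)) ℝ,
      (∑ i, Qh i (Fin.last K) = 1 - ρ) →
      Fhat Qh = F (fun i j => Qh i (Fin.castSucc j)) := by
    intro Qh hlast
    rw [hFhat]
    refine Eq.trans ?_ (hF _).symm
    beta_reduce
    have h1 : ∀ i, ∑ j, Qh i j * C i j
        = ∑ j : Fin K, Qh i (Fin.castSucc j) * (-Real.log (P i j)) := by
      intro i
      rw [Fin.sum_univ_castSucc]
      simp [hC]
    have h2 : ∑ j, lamv j * ((∑ i, Qh i j) * Real.log ((∑ i, Qh i j) / β j))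
        = lam * ∑ j : Fin K, (∑ i, Qh i (Fin.castSucc j)) *
            Real.log ((∑ i, Qh i (Fin.castSucc j)) / (ρ / (K:ℝ))) := by
      rw [Fin.sum_univ_castSucc]
      simp [hβ, hlamv, hlast, div_self hρ1, Finset.mul_sum]
    simp only [h1]
    rw [h2]
  have hQeq : Qstar = fun i j => Qhstar i (Fin.castSucc j) := by
    ext i j; exact hQstar i j
  rw [hΦ] at hmem
  obtain ⟨hpos, hrow, hlast⟩ := hmem
  -- row sums of Qstar
  have hrowQ : ∀ i, (∑ j : Fin K, Qhstar i (Fin.castSucc j))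
      = 1 / (N:ℝ) - Qhstar i (Fin.last K) := by
    intro i
    have := hrow i
    rw [Fin.sum_univ_castSucc] at this
    linarith
  have htotQ : ∑ i, ∑ j : Fin K, Qhstar i (Fin.castSucc j) = ρ := by
    simp only [hrowQ]
    rw [Finset.sum_sub_distrib, hlast, Finset.sum_const, Finset.card_univ,
      Fintype.card_fin, nsmul_eq_mul]
    field_simp
    ring
  have hmemPi : Qstar ∈ Pi := by
    rw [hPi, hQeq]
    refine ⟨fun i j => hpos i _, fun i => ?_, htotQ⟩
    rw [hrowQ i]
    have := hpos i (Fin.last K)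
    linarith
  have hFeq : F Qstar = Fhat Qhstar := by
    rw [hQeq, key Qhstar hlast]
  refine ⟨hmemPi, fun Q hQ => ?_, hFeq⟩
  rw [hPi] at hQ
  obtain ⟨hQpos, hQrow, hQtot⟩ := hQ
  set Qh : Matrix (Fin N) (Fin (K+1)) ℝ :=
    fun i => Fin.snoc (Q i) (1 / (N:ℝ) - ∑ j, Q i j) with hQh
  have hQhmem : Qh ∈ Φ := by
    rw [hΦ]
    refine ⟨fun i j => ?_, fun i => ?_, ?_⟩
    · refine Fin.lastCases ?_ ?_ j
      · simp only [hQh, Fin.snoc_last]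
        have := hQrow i
        linarith
      · intro k
        simpa [hQh] using hQpos i k
    · rw [Fin.sum_univ_castSucc]
      simp [hQh]
    · simp only [hQh, Fin.snoc_last]
      rw [Finset.sum_sub_distrib, hQtot, Finset.sum_const, Finset.card_univ,
        Fintype.card_fin, nsmul_eq_mul]
      field_simp
  have hrest : Fhat Qh = F Q := by
    have hl : ∑ i, Qh i (Fin.last K) = 1 - ρ := by
      rw [hΦ] at hQhmem; exact hQhmem.2.2
    rw [key Qh hl]
    congr 1
    ext i j
    simp [hQh]
  calc F Qstar = Fhat Qhstar := hFeq
    _ ≤ Fhat Qh := hmin Qh hQhmem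
    _ = F Q := hrest
end

section
/- Let Q* ∈ Π be a minimizer of F over Π, and define ξ ∈ ℝ^N by ξ_i = 1/N − Σ_{j=1}^K Q*_{ij}. Then the N×(K+1) matrix Q̂† = [Q*, ξ] obtained by appending ξ as a last column lies in Φ_ρ and minimizes F̂ over Φ_ρ, with F̂(Q̂†) = F(Q*). -/
open scoped BigOperators

/-- If `Qstar` minimizes `F` over `Pi` and `ξ i = 1/N - ∑ j, Qstar i j`,
then the extended matrix `Qhat = [Qstar, ξ]` lies in `Φ`, minimizes `Fhat` over `Φ`,
and `Fhat Qhat = F Qstar`. -/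
theorem stmt_1
    (N K : ℕ) (hN : 0 < N) (hK : 0 < K)
    (ρ lam lamK1 : ℝ) (hρ : ρ ∈ Set.Ioo (0 : ℝ) 1) (hlam : 0 < lam) (hlamK1 : 0 ≤ lamK1)
    (P : Matrix (Fin N) (Fin K) ℝ) (hP : ∀ i j, P i j ∈ Set.Ioc (0 : ℝ) 1)
    (Pi : Set (Matrix (Fin N) (Fin K) ℝ))
    (hPi : Pi = {Q | (∀ i j, 0 ≤ Q i j) ∧ (∀ i, ∑ j, Q i j ≤ 1 / (N : ℝ)) ∧
        ∑ i, ∑ j, Q i j = ρ})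
    (F : Matrix (Fin N) (Fin K) ℝ → ℝ)
    (hF : ∀ Q, F Q = (∑ i, ∑ j, Q i j * (-Real.log (P i j))) +
        lam * ∑ j, (∑ i, Q i j) * Real.log ((∑ i, Q i j) / (ρ / (K : ℝ))))
    (C : Matrix (Fin N) (Fin (K + 1)) ℝ)
    (hC : ∀ i, C i = Fin.snoc (fun j => -Real.log (P i j)) 0)
    (β : Fin (K + 1) → ℝ) (hβ : β = Fin.snoc (fun _ => ρ / (K : ℝ)) (1 - ρ))
    (lamv : Fin (K + 1) → ℝ) (hlamv : lamv = Fin.snoc (fun _ => lam) lamK1)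
    (Fhat : Matrix (Fin N) (Fin (K + 1)) ℝ → ℝ)
    (hFhat : ∀ Qh, Fhat Qh = (∑ i, ∑ j, Qh i j * C i j) +
        ∑ j, lamv j * ((∑ i, Qh i j) * Real.log ((∑ i, Qh i j) / β j)))
    (Φ : Set (Matrix (Fin N) (Fin (K + 1)) ℝ))
    (hΦ : Φ = {Qh | (∀ i j, 0 ≤ Qh i j) ∧ (∀ i, ∑ j, Qh i j = 1 / (N : ℝ)) ∧
        ∑ i, Qh i (Fin.last K) = 1 - ρ})
    (Qstar : Matrix (Fin N) (Fin K) ℝ)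
    (hmem : Qstar ∈ Pi) (hmin : ∀ Q ∈ Pi, F Qstar ≤ F Q)
    (ξ : Fin N → ℝ) (hξ : ∀ i, ξ i = 1 / (N : ℝ) - ∑ j, Qstar i j)
    (Qhat : Matrix (Fin N) (Fin (K + 1)) ℝ)
    (hQhat : ∀ i, Qhat i = Fin.snoc (Qstar i) (ξ i)) :
    Qhat ∈ Φ ∧ (∀ Qh ∈ Φ, Fhat Qhat ≤ Fhat Qh) ∧ Fhat Qhat = F Qstar := by

  obtain ⟨hρ0, hρ1⟩ := hρ
  have hN' : (N : ℝ) ≠ 0 := Nat.cast_ne_zero.mpr hN.ne'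
  have h1ρ : (1 : ℝ) - ρ ≠ 0 := sub_ne_zero.mpr hρ1.ne'
  subst hPi hΦ hβ hlamv
  obtain ⟨hQnn, hQrow, hQtot⟩ := hmem
  -- For any Qh with correct last-column sum, Fhat Qh = F of its first K columns
  have key : ∀ Qh : Matrix (Fin N) (Fin (K+1)) ℝ,
      (∑ i, Qh i (Fin.last K) = 1 - ρ) →
      Fhat Qh = F (fun i j => Qh i (Fin.castSucc j)) := by
    intro Qh hlast
    rw [hFhat, hF (fun i j => Qh i (Fin.castSucc j))]
    congr 1
    · apply Finset.sum_congr rfl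
      intro i _
      rw [Fin.sum_univ_castSucc]
      simp [hC i]
    · rw [Fin.sum_univ_castSucc]
      simp only [Fin.snoc_castSucc, Fin.snoc_last]
      rw [hlast, div_self h1ρ, Real.log_one, mul_zero, mul_zero, add_zero,
        Finset.mul_sum]
  -- Qhat's first K columns are Qstar
  have hrestrict : (fun i j => Qhat i (Fin.castSucc j)) = Qstar := by
    funext i j
    rw [hQhat i, Fin.snoc_castSucc]
  have hξsum : ∑ i, ξ i = 1 - ρ := by
    have : ∑ i, ξ i = ∑ i : Fin N, (1 / (N : ℝ)) - ∑ i, ∑ j, Qstar i j := by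
      rw [← Finset.sum_sub_distrib]
      exact Finset.sum_congr rfl fun i _ => hξ i
    rw [this, hQtot, Finset.sum_const, Finset.card_univ, Fintype.card_fin,
      nsmul_eq_mul, mul_one_div, div_self hN']
  have hQhatlast : ∑ i, Qhat i (Fin.last K) = 1 - ρ := by
    have : ∀ i, Qhat i (Fin.last K) = ξ i := fun i => by rw [hQhat i, Fin.snoc_last]
    rw [Finset.sum_congr rfl fun i _ => this i, hξsum]
  have hFQhat : Fhat Qhat = F Qstar := by
    rw [key Qhat hQhatlast, hrestrict]
  have hQhatmem : Qhat ∈ {Qh : Matrix (Fin N) (Fin (K+1)) ℝ |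
      (∀ i j, 0 ≤ Qh i j) ∧ (∀ i, ∑ j, Qh i j = 1 / (N : ℝ)) ∧
      ∑ i, Qh i (Fin.last K) = 1 - ρ} := by
    refine ⟨?_, ?_, hQhatlast⟩
    · intro i j
      rw [hQhat i]
      refine Fin.lastCases ?_ ?_ j
      · rw [Fin.snoc_last, hξ i]
        linarith [hQrow i]
      · intro j
        rw [Fin.snoc_castSucc]
        exact hQnn i j
    · intro i
      rw [Fin.sum_univ_castSucc]
      have h1 : ∀ j : Fin K, Qhat i (Fin.castSucc j) = Qstar i j := fun j => by
        rw [hQhat i, Fin.snoc_castSucc]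
      rw [Finset.sum_congr rfl fun j _ => h1 j, hQhat i, Fin.snoc_last, hξ i]
      ring
  refine ⟨hQhatmem, ?_, hFQhat⟩
  intro Qh hQh
  obtain ⟨hnn, hrow, hlast⟩ := hQh
  rw [hFQhat, key Qh hlast]
  apply hmin
  refine ⟨fun i j => hnn i _, ?_, ?_⟩
  · intro i
    have := hrow i
    rw [Fin.sum_univ_castSucc] at this
    have h0 := hnn i (Fin.last K)
    linarith
  · have : ∀ i, ∑ j : Fin K, Qh i (Fin.castSucc j) = 1 / (N : ℝ) - Qh i (Fin.last K) := by
      intro i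
      have := hrow i
      rw [Fin.sum_univ_castSucc] at this
      linarith
    rw [Finset.sum_congr rfl fun i _ => this i, Finset.sum_sub_distrib, hlast,
      Finset.sum_const, Finset.card_univ, Fintype.card_fin, nsmul_eq_mul,
      mul_one_div, div_self hN']
    ring
end

section
/- For every δ > 0 there exists Λ₀ ≥ 0 such that for all Λ ≥ Λ₀: every minimizer Q̂ of G_Λ over Φ satisfies |m̂_{K+1} − (1−ρ)| ≤ δ, where m̂_{K+1} = Σ_{i=1}^N Q̂_{i,K+1} is the mass assigned to the virtual cluster. In other words, as the penalty weight on the virtual cluster tends to +∞, minimizers are forced to assign exactly mass 1−ρ to the virtual cluster. -/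
open scoped BigOperators

lemma kl_nonneg {c t : ℝ} (hc : 0 < c) (ht : 0 ≤ t) :
    0 ≤ t * Real.log (t / c) - t + c := by
  rcases ht.eq_or_lt with h | h
  · simp [← h]; linarith
  · have h1 : Real.log (c / t) ≤ c / t - 1 := Real.log_le_sub_one_of_pos (by positivity)
    have h2 : Real.log (t / c) = - Real.log (c / t) := by
      rw [← Real.log_inv]; congr 1; field_simp
    have h3 : t * (c / t - 1) = c - t := by field_simp
    rw [h2]
    nlinarith [mul_le_mul_of_nonneg_left h1 h.le]

lemma kl_pos {c t : ℝ} (hc : 0 < c) (ht : 0 ≤ t) (hne : t ≠ c) :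
    0 < t * Real.log (t / c) - t + c := by
  rcases ht.eq_or_lt with h | h
  · simp [← h]; linarith
  · have hx : c / t ≠ 1 := by
      intro heq
      exact hne ((div_eq_one_iff_eq (ne_of_gt h)).mp heq).symm
    have h1 : Real.log (c / t) < c / t - 1 := Real.log_lt_sub_one_of_pos (by positivity) hx
    have h2 : Real.log (t / c) = - Real.log (c / t) := by
      rw [← Real.log_inv]; congr 1; field_simp
    have h3 : t * (c / t - 1) = c - t := by field_simp
    rw [h2]
    nlinarith [mul_lt_mul_of_pos_left h1 h]

/-- For every `δ > 0` there is a penalty threshold `Λ₀ ≥ 0` such that for all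
`Λ ≥ Λ₀`, every minimizer of `G Λ` over `Φ` assigns mass within `δ` of `1-ρ` to the
virtual (last) cluster. -/
theorem stmt_5
    (N K : ℕ) (hN : 0 < N) (hK : 0 < K)
    (ρ lam : ℝ) (hρ : ρ ∈ Set.Ioo (0 : ℝ) 1) (hlam : 0 < lam)
    (P : Matrix (Fin N) (Fin K) ℝ) (hP : ∀ i j, P i j ∈ Set.Ioc (0 : ℝ) 1)
    (C : Matrix (Fin N) (Fin (K + 1)) ℝ)
    (hC : ∀ i, C i = Fin.snoc (fun j => -Real.log (P i j)) 0)
    (Φ : Set (Matrix (Fin N) (Fin (K + 1)) ℝ))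
    (hΦ : Φ = {Qh | (∀ i j, 0 ≤ Qh i j) ∧ ∀ i, ∑ j, Qh i j = 1 / (N : ℝ)})
    (G : ℝ → Matrix (Fin N) (Fin (K + 1)) ℝ → ℝ)
    (hG : ∀ Λ Qh, G Λ Qh = (∑ i, ∑ j, Qh i j * C i j) +
        lam * (∑ j : Fin K, ((∑ i, Qh i j.castSucc) *
            Real.log ((∑ i, Qh i j.castSucc) / (ρ / (K : ℝ))) -
          (∑ i, Qh i j.castSucc) + ρ / (K : ℝ))) +
        Λ * ((∑ i, Qh i (Fin.last K)) *
            Real.log ((∑ i, Qh i (Fin.last K)) / (1 - ρ)) -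
          (∑ i, Qh i (Fin.last K)) + (1 - ρ))) :
    ∀ δ > 0, ∃ Λ₀ ≥ (0 : ℝ), ∀ Λ ≥ Λ₀, ∀ Qh ∈ Φ,
      (∀ Qh' ∈ Φ, G Λ Qh ≤ G Λ Qh') →
      |(∑ i, Qh i (Fin.last K)) - (1 - ρ)| ≤ δ := by
  intro δ hδ
  obtain ⟨hρ0, hρ1⟩ := hρ
  have hc : (0 : ℝ) < 1 - ρ := by linarith
  have hNpos : (0 : ℝ) < (N : ℝ) := by exact_mod_cast hN
  have hKpos : (0 : ℝ) < (K : ℝ) := by exact_mod_cast hK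
  have hNne : (N : ℝ) ≠ 0 := ne_of_gt hNpos
  have hKne : (K : ℝ) ≠ 0 := ne_of_gt hKpos
  set c : ℝ := 1 - ρ with hcdef
  -- C is nonnegative
  have hCnn : ∀ i j, 0 ≤ C i j := by
    intro i j
    rw [hC i]
    refine Fin.lastCases ?_ (fun j => ?_) j
    · simp
    · simp only [Fin.snoc_castSucc, neg_nonneg]
      exact Real.log_nonpos (hP i j).1.le (hP i j).2
  -- the reference point Q*
  set Qs : Matrix (Fin N) (Fin (K + 1)) ℝ :=
    fun _ j => if j = Fin.last K then c / N else ρ / (N * K) with hQs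
  have hQsΦ : Qs ∈ Φ := by
    rw [hΦ]
    constructor
    · intro i j
      by_cases h : j = Fin.last K <;> simp [hQs, h] <;> positivity
    · intro i
      rw [Fin.sum_univ_castSucc]
      have h1 : ∀ j : Fin K, Qs i j.castSucc = ρ / (N * K) := by
        intro j
        simp only [hQs]
        rw [if_neg (Fin.castSucc_lt_last j).ne]
      have h2 : Qs i (Fin.last K) = c / N := by simp [hQs]
      rw [Finset.sum_congr rfl (fun j _ => h1 j), h2, Finset.sum_const,
        Finset.card_univ, Fintype.card_fin, nsmul_eq_mul, hcdef, mul_div_assoc']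
      rw [div_add_div _ _ (mul_ne_zero hNne hKne) hNne, div_eq_div_iff (mul_ne_zero (mul_ne_zero hNne hKne) hNne) hNne];
        ring
  -- column sums of Q*
  have hQscol : ∀ j : Fin K, (∑ i, Qs i j.castSucc) = ρ / K := by
    intro j
    have h1 : ∀ i : Fin N, Qs i j.castSucc = ρ / (N * K) := by
      intro i
      simp only [hQs]
      rw [if_neg (Fin.castSucc_lt_last j).ne]
    rw [Finset.sum_congr rfl (fun i _ => h1 i), Finset.sum_const,
      Finset.card_univ, Fintype.card_fin, nsmul_eq_mul]
    field_simp
  have hQslast : (∑ i, Qs i (Fin.last K)) = c := by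
    have h1 : ∀ i : Fin N, Qs i (Fin.last K) = c / N := by intro i; simp [hQs]
    rw [Finset.sum_congr rfl (fun i _ => h1 i), Finset.sum_const,
      Finset.card_univ, Fintype.card_fin, nsmul_eq_mul]
    field_simp
  -- the constant B
  set B : ℝ := ∑ i, ∑ j, Qs i j * C i j with hB
  have hBnn : 0 ≤ B := by
    apply Finset.sum_nonneg; intro i _; apply Finset.sum_nonneg; intro j _
    have : 0 ≤ Qs i j := by
      by_cases h : j = Fin.last K <;> simp [hQs, h] <;> positivity
    exact mul_nonneg this (hCnn i j)
  have hGQs : ∀ Λ, G Λ Qs = B := by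
    intro Λ
    rw [hG]
    have hρK : (0 : ℝ) < ρ / K := by positivity
    have hz1 : ∀ j : Fin K, ((∑ i, Qs i j.castSucc) *
        Real.log ((∑ i, Qs i j.castSucc) / (ρ / (K : ℝ))) -
        (∑ i, Qs i j.castSucc) + ρ / (K : ℝ)) = 0 := by
      intro j
      rw [hQscol j, div_self (ne_of_gt hρK), Real.log_one]
      ring
    rw [Finset.sum_congr rfl (fun j _ => hz1 j)]
    rw [hQslast, div_self (ne_of_gt hc), Real.log_one]
    simp [hB]
  -- penalty function is nonneg / positive
  -- compact set S
  set S : Set ℝ := Set.Icc 0 1 ∩ {t | δ ≤ |t - c|} with hSdef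
  have hScl : IsClosed {t : ℝ | δ ≤ |t - c|} := by
    have : Continuous fun t : ℝ => |t - c| := (continuous_id.sub continuous_const).abs
    exact isClosed_le continuous_const this
  have hScomp : IsCompact S := isCompact_Icc.inter_right hScl
  -- continuous surrogate g
  set g : ℝ → ℝ := fun t => t * Real.log t - t * Real.log c - t + c with hg
  have hgcont : Continuous g := by
    apply Continuous.add
    apply Continuous.sub
    apply Continuous.sub Real.continuous_mul_log
    exact continuous_id.mul continuous_const
    exact continuous_id
    exact continuous_const
  have hfg : ∀ t : ℝ, 0 ≤ t → t * Real.log (t / c) - t + c = g t := by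
    intro t ht
    rcases ht.eq_or_lt with h | h
    · simp [hg, ← h]
    · rw [Real.log_div (ne_of_gt h) (ne_of_gt hc)]; ring
  -- case on whether S is empty
  rcases Set.eq_empty_or_nonempty S with hSe | hSne
  · -- S empty: every t in [0,1] is within δ of c
    refine ⟨0, le_refl 0, fun Λ _ Qh hQh _ => ?_⟩
    rw [hΦ] at hQh
    obtain ⟨hQnn, hQrow⟩ := hQh
    set m := ∑ i, Qh i (Fin.last K) with hm
    have hm0 : 0 ≤ m := Finset.sum_nonneg fun i _ => hQnn i _
    have hm1 : m ≤ 1 := by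
      have h1 : ∀ i : Fin N, Qh i (Fin.last K) ≤ ∑ j, Qh i j :=
        fun i => Finset.single_le_sum (fun j _ => hQnn i j) (Finset.mem_univ _)
      calc m ≤ ∑ i, ∑ j, Qh i j := Finset.sum_le_sum fun i _ => h1 i
        _ = ∑ i : Fin N, 1 / (N : ℝ) := Finset.sum_congr rfl fun i _ => hQrow i
        _ = 1 := by
          simp only [Finset.sum_const, Finset.card_univ, Fintype.card_fin, nsmul_eq_mul]
          field_simp
    by_contra hcon
    push_neg at hcon
    exact Set.eq_empty_iff_forall_notMem.mp hSe m ⟨⟨hm0, hm1⟩, le_of_lt hcon⟩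
  · -- S nonempty: get the min ε of g on S
    obtain ⟨t₀, ht₀S, hmin⟩ := hScomp.exists_isMinOn hSne hgcont.continuousOn
    set ε : ℝ := g t₀ with hε
    have ht₀0 : 0 ≤ t₀ := ht₀S.1.1
    have ht₀ne : t₀ ≠ c := by
      intro h
      have := ht₀S.2
      rw [h] at this
      simp at this
      linarith
    have hεpos : 0 < ε := by
      rw [hε, ← hfg t₀ ht₀0]
      exact kl_pos hc ht₀0 ht₀ne
    have hBε : 0 ≤ B / ε := div_nonneg hBnn hεpos.le
    refine ⟨B / ε + 1, by linarith, fun Λ hΛ Qh hQh hmin' => ?_⟩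
    have hΛpos : 0 < Λ := lt_of_lt_of_le (by linarith) hΛ
    rw [hΦ] at hQh
    obtain ⟨hQnn, hQrow⟩ := hQh
    set m := ∑ i, Qh i (Fin.last K) with hm
    have hm0 : 0 ≤ m := Finset.sum_nonneg fun i _ => hQnn i _
    have hm1 : m ≤ 1 := by
      have h1 : ∀ i : Fin N, Qh i (Fin.last K) ≤ ∑ j, Qh i j :=
        fun i => Finset.single_le_sum (fun j _ => hQnn i j) (Finset.mem_univ _)
      calc m ≤ ∑ i, ∑ j, Qh i j := Finset.sum_le_sum fun i _ => h1 i
        _ = ∑ i : Fin N, 1 / (N : ℝ) := Finset.sum_congr rfl fun i _ => hQrow i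
        _ = 1 := by
          simp only [Finset.sum_const, Finset.card_univ, Fintype.card_fin, nsmul_eq_mul]
          field_simp
    by_contra hcon
    push_neg at hcon
    have hmS : m ∈ S := ⟨⟨hm0, hm1⟩, le_of_lt hcon⟩
    -- f(m) ≥ ε
    have hfm : ε ≤ m * Real.log (m / c) - m + c := by
      rw [hfg m hm0]
      exact hmin hmS
    -- lower bounds on the other terms of G Λ Qh
    have hcost : 0 ≤ ∑ i, ∑ j, Qh i j * C i j := by
      apply Finset.sum_nonneg; intro i _; apply Finset.sum_nonneg; intro j _
      exact mul_nonneg (hQnn i j) (hCnn i j)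
    have hpen : 0 ≤ ∑ j : Fin K, ((∑ i, Qh i j.castSucc) *
        Real.log ((∑ i, Qh i j.castSucc) / (ρ / (K : ℝ))) -
        (∑ i, Qh i j.castSucc) + ρ / (K : ℝ)) := by
      apply Finset.sum_nonneg; intro j _
      exact kl_nonneg (by positivity) (Finset.sum_nonneg fun i _ => hQnn i _)
    have hle : G Λ Qh ≤ B := by
      rw [← hGQs Λ]; exact hmin' Qs hQsΦ
    have hG2 : Λ * ε ≤ B := by
      have hfm' : ε ≤ (∑ i, Qh i (Fin.last K)) *
          Real.log ((∑ i, Qh i (Fin.last K)) / c) -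
          (∑ i, Qh i (Fin.last K)) + c := by rw [← hm]; exact hfm
      have h1 : Λ * ε ≤ Λ * ((∑ i, Qh i (Fin.last K)) *
          Real.log ((∑ i, Qh i (Fin.last K)) / c) -
          (∑ i, Qh i (Fin.last K)) + c) :=
        mul_le_mul_of_nonneg_left hfm' hΛpos.le
      have h2 := hG Λ Qh
      have hq : 0 ≤ lam * ∑ j : Fin K, ((∑ i, Qh i j.castSucc) *
          Real.log ((∑ i, Qh i j.castSucc) / (ρ / (K : ℝ))) -
          (∑ i, Qh i j.castSucc) + ρ / (K : ℝ)) := mul_nonneg hlam.le hpen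
      clear_value B ε m
      linarith [h1, h2, hle, hcost, hq]
    have : B + ε ≤ Λ * ε := by
      have : (B / ε + 1) * ε ≤ Λ * ε := mul_le_mul_of_nonneg_right hΛ hεpos.le
      calc B + ε = (B / ε + 1) * ε := by field_simp
        _ ≤ Λ * ε := this
    linarith
end

section
/- Suppose a ∈ ℝ^n and b ∈ ℝ^k have strictly positive entries and satisfy the scaling fixed-point relations a_i = α_i / (M b)_i for every i and b_j = ( β_j / (Mᵀ a)_j )^{f_j} for every j, where f_j = λ_j/(λ_j + ε). Then the matrix Q* defined by Q*_{ij} = a_i · M_{ij} · b_j is the unique minimizer of J over the feasible set Φ_α = {Q ∈ ℝ^{n×k} : Q_{ij} ≥ 0 for all i,j; Σ_{j=1}^k Q_{ij} = α_i for every i}. -/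
open scoped BigOperators

lemma stmt6_core_le (s t : ℝ) (hs : 0 ≤ s) (ht : 0 < t) :
    s - t ≤ s * Real.log (s / t) := by
  rcases eq_or_lt_of_le hs with h | h
  · simp [← h]; linarith
  · have h1 : Real.log (t / s) ≤ t / s - 1 := Real.log_le_sub_one_of_pos (div_pos ht h)
    have h2 : Real.log (s / t) = Real.log s - Real.log t := Real.log_div h.ne' ht.ne'
    have h3 : Real.log (t / s) = Real.log t - Real.log s := Real.log_div ht.ne' h.ne'
    have h4 : s * (t / s) = t := by field_simp
    nlinarith [mul_le_mul_of_nonneg_left h1 h.le]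

lemma stmt6_core_lt (s t : ℝ) (hs : 0 ≤ s) (ht : 0 < t) (hne : s ≠ t) :
    s - t < s * Real.log (s / t) := by
  rcases eq_or_lt_of_le hs with h | h
  · rw [← h]; simp; linarith
  · have hts : t / s ≠ 1 := by
      intro hh
      apply hne
      field_simp at hh
      linarith
    have h1 : Real.log (t / s) < t / s - 1 := Real.log_lt_sub_one_of_pos (div_pos ht h) hts
    have h2 : Real.log (s / t) = Real.log s - Real.log t := Real.log_div h.ne' ht.ne'
    have h3 : Real.log (t / s) = Real.log t - Real.log s := Real.log_div ht.ne' h.ne'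
    have h4 : s * (t / s) = t := by field_simp
    nlinarith [mul_lt_mul_of_pos_left h1 h]

/-- If positive scaling vectors `a, b` satisfy the scaling fixed-point
relations, then `Qstar i j = a i * M i j * b j` is the unique minimizer of the entropic
objective `J` (with weighted unnormalized KL column penalties) over the feasible set of
nonnegative matrices with row sums `α`. -/
theorem stmt_6
    (n k : ℕ) (hn : 0 < n) (hk : 0 < k)
    (ε : ℝ) (hε : 0 < ε)
    (C : Matrix (Fin n) (Fin k) ℝ)
    (lam : Fin k → ℝ) (hlam : ∀ j, 0 < lam j)
    (α : Fin n → ℝ) (hα : ∀ i, 0 < α i)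
    (β : Fin k → ℝ) (hβ : ∀ j, 0 < β j)
    (M : Matrix (Fin n) (Fin k) ℝ) (hM : ∀ i j, M i j = Real.exp (-C i j / ε))
    (f : Fin k → ℝ) (hf : ∀ j, f j = lam j / (lam j + ε))
    (a : Fin n → ℝ) (b : Fin k → ℝ)
    (ha : ∀ i, 0 < a i) (hb : ∀ j, 0 < b j)
    (hfixa : ∀ i, a i = α i / (∑ j, M i j * b j))
    (hfixb : ∀ j, b j = (β j / (∑ i, M i j * a i)) ^ (f j))
    (J : Matrix (Fin n) (Fin k) ℝ → ℝ)
    (hJ : ∀ Q, J Q = (∑ i, ∑ j, Q i j * C i j) +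
        ε * (∑ i, ∑ j, Q i j * Real.log (Q i j)) +
        ∑ j, lam j * ((∑ i, Q i j) * Real.log ((∑ i, Q i j) / β j) -
          (∑ i, Q i j) + β j))
    (Qstar : Matrix (Fin n) (Fin k) ℝ)
    (hQstar : ∀ i j, Qstar i j = a i * M i j * b j)
    (Φα : Set (Matrix (Fin n) (Fin k) ℝ))
    (hΦα : Φα = {Q | (∀ i j, 0 ≤ Q i j) ∧ ∀ i, ∑ j, Q i j = α i}) :
    Qstar ∈ Φα ∧ ∀ Q ∈ Φα, Q ≠ Qstar → J Qstar < J Q := by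
  have hkne : Nonempty (Fin k) := ⟨⟨0, hk⟩⟩
  have hnne : Nonempty (Fin n) := ⟨⟨0, hn⟩⟩
  have hMpos : ∀ i j, 0 < M i j := fun i j => by rw [hM]; exact Real.exp_pos _
  have hS : ∀ i, 0 < ∑ j, M i j * b j := fun i =>
    Finset.sum_pos (fun j _ => mul_pos (hMpos i j) (hb j)) Finset.univ_nonempty
  have hsj : ∀ j, 0 < ∑ i, M i j * a i := fun j =>
    Finset.sum_pos (fun i _ => mul_pos (hMpos i j) (ha i)) Finset.univ_nonempty
  have hQpos : ∀ i j, 0 < Qstar i j := fun i j => by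
    rw [hQstar]; exact mul_pos (mul_pos (ha i) (hMpos i j)) (hb j)
  have hrowstar : ∀ i, ∑ j, Qstar i j = α i := by
    intro i
    have h1 : ∑ j, Qstar i j = a i * ∑ j, M i j * b j := by
      rw [Finset.mul_sum]
      exact Finset.sum_congr rfl fun j _ => by rw [hQstar]; ring
    rw [h1, hfixa i, div_mul_cancel₀ _ (hS i).ne']
  have hcolstar : ∀ j, ∑ i, Qstar i j = b j * ∑ i, M i j * a i := by
    intro j
    rw [Finset.mul_sum]
    exact Finset.sum_congr rfl fun i _ => by rw [hQstar]; ring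
  have hmstarpos : ∀ j, 0 < ∑ i, Qstar i j := fun j =>
    Finset.sum_pos (fun i _ => hQpos i j) Finset.univ_nonempty
  have hlogb : ∀ j, Real.log (b j)
      = f j * (Real.log (β j) - Real.log (∑ i, M i j * a i)) := by
    intro j
    rw [hfixb j, Real.log_rpow (div_pos (hβ j) (hsj j)),
      Real.log_div (hβ j).ne' (hsj j).ne']
  set L : Fin k → ℝ := fun j => Real.log ((∑ i, Qstar i j) / β j) with hLdef
  have hLval : ∀ j, L j
      = (f j - 1) * (Real.log (β j) - Real.log (∑ i, M i j * a i)) := by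
    intro j
    have : L j = Real.log (b j) + Real.log (∑ i, M i j * a i) - Real.log (β j) := by
      simp only [hLdef]
      rw [hcolstar j, Real.log_div (mul_pos (hb j) (hsj j)).ne' (hβ j).ne',
        Real.log_mul (hb j).ne' (hsj j).ne']
    rw [this, hlogb j]; ring
  have hgrad : ∀ i j, C i j + ε * (Real.log (Qstar i j) + 1) + lam j * L j
      = ε * (Real.log (a i) + 1) := by
    intro i j
    have hlogQ : Real.log (Qstar i j)
        = Real.log (a i) + (-C i j / ε) + Real.log (b j) := by
      rw [hQstar, Real.log_mul (mul_pos (ha i) (hMpos i j)).ne' (hb j).ne',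
        Real.log_mul (ha i).ne' (hMpos i j).ne', hM, Real.log_exp]
    have hle : lam j + ε ≠ 0 := (add_pos (hlam j) hε).ne'
    rw [hlogQ, hLval j, hlogb j, hf j]
    field_simp
    ring
  have hmem : Qstar ∈ Φα := by
    rw [hΦα]; exact ⟨fun i j => (hQpos i j).le, hrowstar⟩
  refine ⟨hmem, ?_⟩
  intro Q hQ hne
  rw [hΦα] at hQ
  obtain ⟨hQ0, hQrow⟩ := hQ
  obtain ⟨i0, j0, hne0⟩ : ∃ i j, Q i j ≠ Qstar i j := by
    by_contra h
    push_neg at h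
    exact hne (by ext i j; exact h i j)
  set g1 : Fin n → Fin k → ℝ :=
    fun i j => C i j + ε * (Real.log (Qstar i j) + 1) with hg1
  -- entropy per-entry identity
  have hid : ∀ i j,
      (Q i j * C i j + ε * (Q i j * Real.log (Q i j)))
        - (Qstar i j * C i j + ε * (Qstar i j * Real.log (Qstar i j)))
        - g1 i j * (Q i j - Qstar i j)
      = ε * (Q i j * Real.log (Q i j / Qstar i j) - (Q i j - Qstar i j)) := by
    intro i j
    have h2 : Q i j * Real.log (Q i j) - Q i j * Real.log (Qstar i j)
        = Q i j * Real.log (Q i j / Qstar i j) := by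
      rcases eq_or_lt_of_le (hQ0 i j) with h | h
      · simp [← h]
      · rw [Real.log_div h.ne' (hQpos i j).ne']; ring
    simp only [hg1]
    linear_combination ε * h2
  have claim1 : ∀ i j, g1 i j * (Q i j - Qstar i j) ≤
      (Q i j * C i j + ε * (Q i j * Real.log (Q i j)))
        - (Qstar i j * C i j + ε * (Qstar i j * Real.log (Qstar i j))) := by
    intro i j
    have h1 := stmt6_core_le (Q i j) (Qstar i j) (hQ0 i j) (hQpos i j)
    have h3 : 0 ≤ ε * (Q i j * Real.log (Q i j / Qstar i j) - (Q i j - Qstar i j)) :=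
      mul_nonneg hε.le (by linarith)
    rw [← sub_nonneg, hid i j]
    exact h3
  have claim1s : g1 i0 j0 * (Q i0 j0 - Qstar i0 j0) <
      (Q i0 j0 * C i0 j0 + ε * (Q i0 j0 * Real.log (Q i0 j0)))
        - (Qstar i0 j0 * C i0 j0 + ε * (Qstar i0 j0 * Real.log (Qstar i0 j0))) := by
    have h1 := stmt6_core_lt (Q i0 j0) (Qstar i0 j0) (hQ0 i0 j0) (hQpos i0 j0) hne0
    have h3 : 0 < ε * (Q i0 j0 * Real.log (Q i0 j0 / Qstar i0 j0) - (Q i0 j0 - Qstar i0 j0)) :=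
      mul_pos hε (by linarith)
    rw [← sub_pos, hid i0 j0]
    exact h3
  have claim2 : ∀ j, lam j * L j * ((∑ i, Q i j) - (∑ i, Qstar i j)) ≤
      lam j * ((∑ i, Q i j) * Real.log ((∑ i, Q i j) / β j) - (∑ i, Q i j) + β j)
        - lam j * ((∑ i, Qstar i j) * Real.log ((∑ i, Qstar i j) / β j)
            - (∑ i, Qstar i j) + β j) := by
    intro j
    have hm : 0 ≤ ∑ i, Q i j := Finset.sum_nonneg fun i _ => hQ0 i j
    have htp : 0 < ∑ i, Qstar i j := hmstarpos j
    have h1 := stmt6_core_le (∑ i, Q i j) (∑ i, Qstar i j) hm htp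
    have h2 : (∑ i, Q i j) * Real.log ((∑ i, Q i j) / β j)
        - (∑ i, Q i j) * Real.log ((∑ i, Qstar i j) / β j)
        = (∑ i, Q i j) * Real.log ((∑ i, Q i j) / (∑ i, Qstar i j)) := by
      rcases eq_or_lt_of_le hm with h | h
      · simp [← h]
      · rw [Real.log_div h.ne' (hβ j).ne', Real.log_div htp.ne' (hβ j).ne',
          Real.log_div h.ne' htp.ne']
        ring
    have h3 : 0 ≤ lam j * ((∑ i, Q i j) * Real.log ((∑ i, Q i j) / (∑ i, Qstar i j))
        - ((∑ i, Q i j) - (∑ i, Qstar i j))) := mul_nonneg (hlam j).le (by linarith)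
    have hkey :
        (lam j * ((∑ i, Q i j) * Real.log ((∑ i, Q i j) / β j) - (∑ i, Q i j) + β j)
          - lam j * ((∑ i, Qstar i j) * Real.log ((∑ i, Qstar i j) / β j)
              - (∑ i, Qstar i j) + β j))
          - lam j * L j * ((∑ i, Q i j) - (∑ i, Qstar i j))
        = lam j * ((∑ i, Q i j) * Real.log ((∑ i, Q i j) / (∑ i, Qstar i j))
            - ((∑ i, Q i j) - (∑ i, Qstar i j))) := by
      simp only [hLdef]
      linear_combination lam j * h2
    linarith
  have claim3 : ∀ i, ∑ j, (g1 i j + lam j * L j) * (Q i j - Qstar i j) = 0 := by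
    intro i
    have h1 : ∀ j, (g1 i j + lam j * L j) * (Q i j - Qstar i j)
        = ε * (Real.log (a i) + 1) * (Q i j - Qstar i j) := by
      intro j
      have := hgrad i j
      simp only [hg1]
      rw [show C i j + ε * (Real.log (Qstar i j) + 1) + lam j * L j
        = ε * (Real.log (a i) + 1) from this]
    rw [Finset.sum_congr rfl fun j _ => h1 j, ← Finset.mul_sum,
      Finset.sum_sub_distrib, hQrow i, hrowstar i, sub_self, mul_zero]
  -- assemble
  have sum1 : ∑ i, ∑ j, g1 i j * (Q i j - Qstar i j) <
      ∑ i, ∑ j, ((Q i j * C i j + ε * (Q i j * Real.log (Q i j)))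
        - (Qstar i j * C i j + ε * (Qstar i j * Real.log (Qstar i j)))) := by
    apply Finset.sum_lt_sum
    · intro i _
      exact Finset.sum_le_sum fun j _ => claim1 i j
    · exact ⟨i0, Finset.mem_univ _,
        Finset.sum_lt_sum (fun j _ => claim1 i0 j) ⟨j0, Finset.mem_univ _, claim1s⟩⟩
  have sum2 : ∑ j, lam j * L j * ((∑ i, Q i j) - (∑ i, Qstar i j)) ≤
      ∑ j, (lam j * ((∑ i, Q i j) * Real.log ((∑ i, Q i j) / β j) - (∑ i, Q i j) + β j)
        - lam j * ((∑ i, Qstar i j) * Real.log ((∑ i, Qstar i j) / β j)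
            - (∑ i, Qstar i j) + β j)) :=
    Finset.sum_le_sum fun j _ => claim2 j
  have swap : ∑ i, ∑ j, lam j * L j * (Q i j - Qstar i j)
      = ∑ j, lam j * L j * ((∑ i, Q i j) - (∑ i, Qstar i j)) := by
    rw [Finset.sum_comm]
    exact Finset.sum_congr rfl fun j _ => by
      rw [← Finset.mul_sum, Finset.sum_sub_distrib]
  have zero : (∑ i, ∑ j, g1 i j * (Q i j - Qstar i j))
      + ∑ i, ∑ j, lam j * L j * (Q i j - Qstar i j) = 0 := by
    have h1 : ∀ i, (∑ j, g1 i j * (Q i j - Qstar i j))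
        + ∑ j, lam j * L j * (Q i j - Qstar i j) = 0 := by
      intro i
      rw [← Finset.sum_add_distrib, ← claim3 i]
      exact Finset.sum_congr rfl fun j _ => by ring
    rw [← Finset.sum_add_distrib]
    simp [h1]
  have eqF : ∑ i, ∑ j, ((Q i j * C i j + ε * (Q i j * Real.log (Q i j)))
        - (Qstar i j * C i j + ε * (Qstar i j * Real.log (Qstar i j))))
      = ((∑ i, ∑ j, Q i j * C i j) + ε * (∑ i, ∑ j, Q i j * Real.log (Q i j)))
        - ((∑ i, ∑ j, Qstar i j * C i j)
          + ε * (∑ i, ∑ j, Qstar i j * Real.log (Qstar i j))) := by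
    simp only [Finset.sum_sub_distrib, Finset.sum_add_distrib, Finset.mul_sum]
  have eqP : ∑ j, (lam j * ((∑ i, Q i j) * Real.log ((∑ i, Q i j) / β j)
        - (∑ i, Q i j) + β j)
        - lam j * ((∑ i, Qstar i j) * Real.log ((∑ i, Qstar i j) / β j)
            - (∑ i, Qstar i j) + β j))
      = (∑ j, lam j * ((∑ i, Q i j) * Real.log ((∑ i, Q i j) / β j)
          - (∑ i, Q i j) + β j))
        - ∑ j, lam j * ((∑ i, Qstar i j) * Real.log ((∑ i, Qstar i j) / β j)
            - (∑ i, Qstar i j) + β j) := by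
    rw [Finset.sum_sub_distrib]
  rw [hJ Q, hJ Qstar]
  rw [eqF] at sum1
  rw [eqP] at sum2
  rw [swap] at zero
  linarith
end

section
/- Suppose a ∈ ℝ^n and b ∈ ℝ^k have strictly positive entries and satisfy a_i = α_i / (M b)_i for every i and b_j = ( β_j / (Mᵀ a)_j )^{f_j} for every j, where f_j = λ_j/(λ_j + ε). Then the matrix Q* with Q*_{ij} = a_i · M_{ij} · b_j satisfies: (i) its i-th row sum equals α_i for every i, and (ii) its j-th column sum equals β_j^{f_j} · ((Mᵀ a)_j)^{1 − f_j} for every j (i.e., the column marginals equal the closed-form proximal value of Mᵀa for the weighted KL divergence). -/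
open scoped BigOperators

/-- If positive scaling vectors `a, b` satisfy the scaling fixed-point
relations, then `Qstar i j = a i * M i j * b j` has row sums `α i` and column sums
`β j ^ f j * ((Mᵀ a) j) ^ (1 - f j)`. -/
theorem stmt_7
    (n k : ℕ) (hn : 0 < n) (hk : 0 < k)
    (ε : ℝ) (hε : 0 < ε)
    (C : Matrix (Fin n) (Fin k) ℝ)
    (lam : Fin k → ℝ) (hlam : ∀ j, 0 < lam j)
    (α : Fin n → ℝ) (hα : ∀ i, 0 < α i)
    (β : Fin k → ℝ) (hβ : ∀ j, 0 < β j)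
    (M : Matrix (Fin n) (Fin k) ℝ) (hM : ∀ i j, M i j = Real.exp (-C i j / ε))
    (f : Fin k → ℝ) (hf : ∀ j, f j = lam j / (lam j + ε))
    (a : Fin n → ℝ) (b : Fin k → ℝ)
    (ha : ∀ i, 0 < a i) (hb : ∀ j, 0 < b j)
    (hfixa : ∀ i, a i = α i / (∑ j, M i j * b j))
    (hfixb : ∀ j, b j = (β j / (∑ i, M i j * a i)) ^ (f j))
    (Qstar : Matrix (Fin n) (Fin k) ℝ)
    (hQstar : ∀ i j, Qstar i j = a i * M i j * b j) :
    (∀ i, ∑ j, Qstar i j = α i) ∧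
    (∀ j, ∑ i, Qstar i j = β j ^ (f j) * (∑ i, M i j * a i) ^ (1 - f j)) := by

  have hMpos : ∀ i j, 0 < M i j := fun i j => by rw [hM]; exact Real.exp_pos _
  have hS : ∀ j, 0 < ∑ i, M i j * a i := fun j =>
    Finset.sum_pos (fun i _ => mul_pos (hMpos i j) (ha i)) ⟨⟨0, hn⟩, Finset.mem_univ _⟩
  have hR : ∀ i, 0 < ∑ j, M i j * b j := fun i =>
    Finset.sum_pos (fun j _ => mul_pos (hMpos i j) (hb j)) ⟨⟨0, hk⟩, Finset.mem_univ _⟩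
  constructor
  · intro i
    have : ∑ j, Qstar i j = a i * ∑ j, M i j * b j := by
      rw [Finset.mul_sum]
      exact Finset.sum_congr rfl fun j _ => by rw [hQstar]; ring
    rw [this, hfixa i, div_mul_cancel₀ _ (ne_of_gt (hR i))]
  · intro j
    have h1 : ∑ i, Qstar i j = b j * ∑ i, M i j * a i := by
      rw [Finset.mul_sum]
      exact Finset.sum_congr rfl fun i _ => by rw [hQstar]; ring
    rw [h1, hfixb j]
    rw [Real.div_rpow (le_of_lt (hβ j)) (le_of_lt (hS j)), div_mul_eq_mul_div,
      mul_div_assoc]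
    congr 1
    rw [Real.rpow_sub (hS j), Real.rpow_one]
end

section
/- The function h attains its minimum over {x ∈ ℝ^k : x_j ≥ 0 for all j} at the unique point x* with x*_j = β_j^{λ_j/(λ_j+ε)} · z_j^{ε/(λ_j+ε)} for every j; that is, the proximal operator of the weighted unnormalized KL divergence with respect to the unnormalized KL divergence is given in closed form by x*_j = β_j^{f_j} z_j^{1−f_j} with f_j = λ_j/(λ_j+ε). -/
open scoped BigOperators

lemma kl_nonneg_s8 {a b : ℝ} (ha : 0 < a) (hb : 0 ≤ b) :
    0 ≤ b * Real.log (b / a) - b + a := by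
  rcases eq_or_lt_of_le hb with hb0 | hb0
  · simp [← hb0]; linarith
  · have h1 : Real.log (a / b) ≤ a / b - 1 := Real.log_le_sub_one_of_pos (by positivity)
    have h2 : Real.log (a / b) = -Real.log (b / a) := by
      rw [← Real.log_inv]; congr 1; field_simp
    rw [h2] at h1
    have : a / b - 1 = (a - b) / b := by field_simp
    rw [this] at h1
    have h3 : -Real.log (b / a) * b ≤ (a - b) := by
      have h4 := mul_le_mul_of_nonneg_right h1 hb0.le
      rw [div_mul_cancel₀ _ hb0.ne'] at h4
      linarith
    nlinarith

lemma kl_eq_zero {a b : ℝ} (ha : 0 < a) (hb : 0 ≤ b)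
    (heq : b * Real.log (b / a) - b + a = 0) : b = a := by
  by_contra hne
  rcases eq_or_lt_of_le hb with hb0 | hb0
  · simp [← hb0] at heq; linarith
  · have h1 : Real.log (a / b) < a / b - 1 := by
      apply Real.log_lt_sub_one_of_pos (by positivity)
      intro hc
      exact hne (by field_simp at hc; linarith)
    have h2 : Real.log (a / b) = -Real.log (b / a) := by
      rw [← Real.log_inv]; congr 1; field_simp
    rw [h2] at h1
    have : a / b - 1 = (a - b) / b := by field_simp
    rw [this] at h1
    have h3 : -Real.log (b / a) * b < (a - b) := by
      have h4 := mul_lt_mul_of_pos_right h1 hb0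
      rw [div_mul_cancel₀ _ hb0.ne'] at h4
      linarith
    nlinarith

lemma coord_identity {L e b zz t x : ℝ} (hb : 0 < b) (hz : 0 < zz) (ht : 0 < t)
    (hlog : (L + e) * Real.log t = L * Real.log b + e * Real.log zz) (hx : 0 ≤ x) :
    L * (x * Real.log (x / b) - x + b) + e * (x * Real.log (x / zz) - x + zz)
      = (L + e) * (x * Real.log (x / t) - x + t) +
        (L * (t * Real.log (t / b) - t + b) + e * (t * Real.log (t / zz) - t + zz)) := by
  rcases eq_or_lt_of_le hx with hx0 | hx0
  · rw [Real.log_div ht.ne' hb.ne', Real.log_div ht.ne' hz.ne']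
    simp [← hx0]
    linear_combination (-t) * hlog
  · rw [Real.log_div ht.ne' hb.ne', Real.log_div ht.ne' hz.ne',
      Real.log_div hx0.ne' hb.ne', Real.log_div hx0.ne' hz.ne',
      Real.log_div hx0.ne' ht.ne']
    linear_combination (x - t) * hlog

/-- The weighted-KL proximal objective `h` attains its minimum over the
nonnegative orthant at the unique point `xstar j = β j ^ (λ j/(λ j+ε)) * z j ^ (ε/(λ j+ε))`. -/
theorem stmt_8
    (k : ℕ) (hk : 0 < k)
    (ε : ℝ) (hε : 0 < ε)
    (lam β z : Fin k → ℝ)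
    (hlam : ∀ j, 0 < lam j) (hβ : ∀ j, 0 < β j) (hz : ∀ j, 0 < z j)
    (h : (Fin k → ℝ) → ℝ)
    (hh : ∀ x, h x = ∑ j, (lam j * (x j * Real.log (x j / β j) - x j + β j) +
        ε * (x j * Real.log (x j / z j) - x j + z j)))
    (xstar : Fin k → ℝ)
    (hxstar : ∀ j, xstar j = β j ^ (lam j / (lam j + ε)) * z j ^ (ε / (lam j + ε))) :
    (∀ x, (∀ j, 0 ≤ x j) → h xstar ≤ h x) ∧
    (∀ x, (∀ j, 0 ≤ x j) → h x = h xstar → x = xstar) := by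
  have hts : ∀ j, 0 < xstar j := by
    intro j; rw [hxstar j]
    exact mul_pos (Real.rpow_pos_of_pos (hβ j) _) (Real.rpow_pos_of_pos (hz j) _)
  have hlogt : ∀ j, (lam j + ε) * Real.log (xstar j)
      = lam j * Real.log (β j) + ε * Real.log (z j) := by
    intro j
    have hle : lam j + ε ≠ 0 := by have := hlam j; linarith
    rw [hxstar j,
      Real.log_mul (Real.rpow_pos_of_pos (hβ j) _).ne' (Real.rpow_pos_of_pos (hz j) _).ne',
      Real.log_rpow (hβ j), Real.log_rpow (hz j)]
    field_simp
  have hdiff : ∀ x, (∀ j, 0 ≤ x j) →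
      h x - h xstar = ∑ j, (lam j + ε) *
        (x j * Real.log (x j / xstar j) - x j + xstar j) := by
    intro x hx
    rw [hh x, hh xstar, ← Finset.sum_sub_distrib]
    apply Finset.sum_congr rfl
    intro j _
    have := coord_identity (hβ j) (hz j) (hts j) (hlogt j) (hx j)
    linarith [this]
  have hterm_nonneg : ∀ x : Fin k → ℝ, (∀ j, 0 ≤ x j) → ∀ j : Fin k,
      0 ≤ (lam j + ε) * (x j * Real.log (x j / xstar j) - x j + xstar j) := by
    intro x hx j
    have h1 := kl_nonneg_s8 (hts j) (hx j)
    have hle : 0 ≤ lam j + ε := by have := hlam j; linarith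
    exact mul_nonneg hle h1
  constructor
  · intro x hx
    have h1 := hdiff x hx
    have h2 : 0 ≤ ∑ j, (lam j + ε) *
        (x j * Real.log (x j / xstar j) - x j + xstar j) :=
      Finset.sum_nonneg fun j _ => hterm_nonneg x hx j
    linarith
  · intro x hx heq
    have h1 := hdiff x hx
    rw [heq, sub_self] at h1
    have h2 := (Finset.sum_eq_zero_iff_of_nonneg
      (fun j _ => hterm_nonneg x hx j)).mp h1.symm
    funext j
    have h3 := h2 j (Finset.mem_univ j)
    have hpos : 0 < lam j + ε := by have := hlam j; linarith
    have h4 : x j * Real.log (x j / xstar j) - x j + xstar j = 0 := by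
      rcases mul_eq_zero.mp h3 with hc | hc
      · exact absurd hc hpos.ne'
      · exact hc
    exact kl_eq_zero (hts j) (hx j) h4
end
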